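/- Let n ≥ 2 be an integer. Let F be a homeomorphism of ℝ² satisfying F(x + P) = F(x) + P for all x ∈ ℝ² and P ∈ ℤ², and let H be a homeomorphism of ℝ² for which there is a matrix A ∈ GL(2, ℤ) with H(x + P) = H(x) + A·P for all x ∈ ℝ² and P ∈ ℤ². Assume there is an integer vector P₀ ∈ ℤ² such that H ∘ F ∘ H⁻¹(x) = Fⁿ(x) + P₀ for all x ∈ ℝ² (i.e., F and H are lifts of torus homeomorphisms f and h with h ∘ f ∘ h⁻¹ = fⁿ). Then there exists an integer vector Q ∈ ℤ² such that ρ(F) = (1/n) · (A(ρ(F)) + Q), i.e., ρ(F) = { (1/n)(A·v + Q) : v ∈ ρ(F) }. -/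
import Mathlib


open Filter Topology

/-- The rotation set of a map `G : ℝ² → ℝ²` (commuting with integer translations):
the set of vectors `v` for which there are points `xᵢ` and positive integers `mᵢ → ∞`
with `(G^{mᵢ}(xᵢ) − xᵢ)/mᵢ → v`. -/
def rotSet (G : ℝ × ℝ → ℝ × ℝ) : Set (ℝ × ℝ) :=
  {v | ∃ (x : ℕ → ℝ × ℝ) (m : ℕ → ℕ), (∀ i, 0 < m i) ∧ Tendsto m atTop atTop ∧
    Tendsto (fun i => ((m i : ℝ))⁻¹ • (G^[m i] (x i) - x i)) atTop (nhds v)}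

/-- The linear action of an integer 2×2 matrix on `ℝ²`. -/
def matAct (A : Matrix (Fin 2) (Fin 2) ℤ) (v : ℝ × ℝ) : ℝ × ℝ :=
  ((A 0 0 : ℝ) * v.1 + (A 0 1 : ℝ) * v.2, (A 1 0 : ℝ) * v.1 + (A 1 1 : ℝ) * v.2)

lemma matAct_add (A : Matrix (Fin 2) (Fin 2) ℤ) (u v : ℝ × ℝ) :
    matAct A (u + v) = matAct A u + matAct A v := by
  simp only [matAct, Prod.ext_iff, Prod.fst_add, Prod.snd_add]
  constructor <;> ring

lemma matAct_sub (A : Matrix (Fin 2) (Fin 2) ℤ) (u v : ℝ × ℝ) :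
    matAct A (u - v) = matAct A u - matAct A v := by
  simp only [matAct, Prod.ext_iff, Prod.fst_sub, Prod.snd_sub]
  constructor <;> ring

lemma matAct_smul (A : Matrix (Fin 2) (Fin 2) ℤ) (c : ℝ) (v : ℝ × ℝ) :
    matAct A (c • v) = c • matAct A v := by
  simp only [matAct, Prod.ext_iff, Prod.smul_fst, Prod.smul_snd, smul_eq_mul]
  constructor <;> ring

lemma matAct_cont (A : Matrix (Fin 2) (Fin 2) ℤ) : Continuous (matAct A) := by
  unfold matAct; fun_prop

lemma matAct_mul (A B : Matrix (Fin 2) (Fin 2) ℤ) (v : ℝ × ℝ) :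
    matAct (A * B) v = matAct A (matAct B v) := by
  simp only [matAct, Prod.ext_iff, Matrix.mul_apply, Fin.sum_univ_two]
  push_cast
  constructor <;> ring

lemma matAct_one (v : ℝ × ℝ) : matAct 1 v = v := by
  simp [matAct, Matrix.one_apply]

lemma tendsto_inv_smul_zero {e : ℕ → ℝ × ℝ} {m : ℕ → ℕ} {C : ℝ}
    (hm : Tendsto m atTop atTop)
    (h : ∀ᶠ i in atTop, ‖e i‖ ≤ C) :
    Tendsto (fun i => ((m i : ℝ))⁻¹ • e i) atTop (nhds 0) := by
  apply squeeze_zero_norm' (a := fun i => C * ((m i : ℝ))⁻¹)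
  · filter_upwards [h, hm.eventually_ge_atTop 1] with i hi hmi
    rw [norm_smul, norm_inv, Real.norm_natCast, mul_comm]
    have h0 : (0:ℝ) < (m i : ℝ) := by exact_mod_cast hmi
    exact mul_le_mul_of_nonneg_right hi (by positivity)
  · have h1 : Tendsto (fun i => ((m i : ℝ))) atTop atTop :=
      tendsto_natCast_atTop_atTop.comp hm
    simpa using (h1.inv_tendsto_atTop).const_mul C

lemma bdd_of_per (g : ℝ × ℝ → ℝ × ℝ) (hg : Continuous g)
    (hper : ∀ (x : ℝ × ℝ) (p q : ℤ), g (x + ((p : ℝ), (q : ℝ))) = g x) :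
    ∃ C : ℝ, ∀ x, ‖g x‖ ≤ C := by
  obtain ⟨C, hC⟩ := (isCompact_Icc (a := ((0:ℝ), (0:ℝ)))
      (b := (1, 1))).exists_bound_of_continuousOn hg.continuousOn
  refine ⟨C, fun x => ?_⟩
  have hx : x = (Int.fract x.1, Int.fract x.2) + ((⌊x.1⌋ : ℝ), (⌊x.2⌋ : ℝ)) := by
    have h1 : Int.fract x.1 + (⌊x.1⌋:ℝ) = x.1 := by rw [add_comm]; exact Int.floor_add_fract x.1
    have h2 : Int.fract x.2 + (⌊x.2⌋:ℝ) = x.2 := by rw [add_comm]; exact Int.floor_add_fract x.2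
    exact Prod.ext h1.symm h2.symm
  rw [hx, hper]
  refine hC _ ⟨⟨Int.fract_nonneg _, Int.fract_nonneg _⟩,
    ⟨(Int.fract_lt_one _).le, (Int.fract_lt_one _).le⟩⟩

lemma conj_fwd (F K H : ℝ × ℝ → ℝ × ℝ) (A : Matrix (Fin 2) (Fin 2) ℤ) (C : ℝ)
    (hψ : ∀ x, ‖H x - matAct A x‖ ≤ C)
    (hK : ∀ z, K (H z) = H (F z)) :
    ∀ u ∈ rotSet F, matAct A u ∈ rotSet K := by
  rintro u ⟨x, m, hm0, hmtop, hlim⟩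
  have hiter : ∀ (k : ℕ) (z : ℝ × ℝ), K^[k] (H z) = H (F^[k] z) := by
    intro k
    induction k with
    | zero => intro z; simp
    | succ k ih =>
      intro z
      rw [Function.iterate_succ_apply, hK, ih, ← Function.iterate_succ_apply]
  refine ⟨fun i => H (x i), m, hm0, hmtop, ?_⟩
  have key : ∀ i, ((m i : ℝ))⁻¹ • (K^[m i] (H (x i)) - H (x i))
      = matAct A (((m i : ℝ))⁻¹ • (F^[m i] (x i) - x i))
        + ((m i : ℝ))⁻¹ • ((H (F^[m i] (x i)) - matAct A (F^[m i] (x i)))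
            - (H (x i) - matAct A (x i))) := by
    intro i
    rw [hiter, matAct_smul, matAct_sub, ← smul_add]
    congr 1
    abel
  have h1 : Tendsto (fun i => matAct A (((m i : ℝ))⁻¹ • (F^[m i] (x i) - x i)))
      atTop (nhds (matAct A u)) := ((matAct_cont A).tendsto u).comp hlim
  have h2 : Tendsto (fun i => ((m i : ℝ))⁻¹ •
      ((H (F^[m i] (x i)) - matAct A (F^[m i] (x i))) - (H (x i) - matAct A (x i))))
      atTop (nhds 0) := by
    apply tendsto_inv_smul_zero (C := C + C) hmtop
    filter_upwards with i
    exact (norm_sub_le _ _).trans (add_le_add (hψ _) (hψ _))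
  have := h1.add h2
  rw [add_zero] at this
  exact this.congr (fun i => (key i).symm)

lemma pow_bwd (F K : ℝ × ℝ → ℝ × ℝ) (n : ℕ) (hn : 0 < n) (P : ℝ × ℝ)
    (hKm : ∀ (m : ℕ) (x : ℝ × ℝ), K^[m] x = F^[n * m] x + m • P) :
    ∀ w ∈ rotSet K, (n : ℝ)⁻¹ • (w - P) ∈ rotSet F := by
  rintro w ⟨x, m, hm0, hmtop, hlim⟩
  refine ⟨x, fun i => n * m i, fun i => Nat.mul_pos hn (hm0 i), ?_, ?_⟩
  · exact tendsto_atTop_mono (fun i => Nat.le_mul_of_pos_left _ hn) hmtop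
  · have key : ∀ i, ((n * m i : ℕ) : ℝ)⁻¹ • (F^[n * m i] (x i) - x i)
        = (n : ℝ)⁻¹ • (((m i : ℝ))⁻¹ • (K^[m i] (x i) - x i) - P) := by
      intro i
      have hD : K^[m i] (x i) - x i = (F^[n * m i] (x i) - x i) + (m i) • P := by
        rw [hKm]; abel
      have hm' : ((m i : ℝ)) ≠ 0 := by
        exact_mod_cast (hm0 i).ne'
      have hn' : ((n : ℝ)) ≠ 0 := by exact_mod_cast hn.ne'
      rw [hD, ← Nat.cast_smul_eq_nsmul ℝ]
      push_cast
      match_scalars <;> (field_simp; try ring)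
    rw [show (n : ℝ)⁻¹ • (w - P) = (n : ℝ)⁻¹ • (w - P) from rfl]
    have : Tendsto (fun i => (n : ℝ)⁻¹ • (((m i : ℝ))⁻¹ • (K^[m i] (x i) - x i) - P))
        atTop (nhds ((n : ℝ)⁻¹ • (w - P))) :=
      ((hlim.sub_const P).const_smul _)
    exact this.congr (fun i => (key i).symm)

lemma pow_fwd (F K : ℝ × ℝ → ℝ × ℝ) (n : ℕ) (hn : 2 ≤ n) (P : ℝ × ℝ) (CF : ℝ)
    (hCF : ∀ x, ‖F x - x‖ ≤ CF)
    (hKm : ∀ (m : ℕ) (x : ℝ × ℝ), K^[m] x = F^[n * m] x + m • P) :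
    ∀ u ∈ rotSet F, (n : ℝ) • u + P ∈ rotSet K := by
  rintro u ⟨x, m, hm0, hmtop, hlim⟩
  have hn0 : 0 < n := by omega
  have hCF0 : 0 ≤ CF := le_trans (norm_nonneg _) (hCF 0)
  have hFk : ∀ (k : ℕ) (z : ℝ × ℝ), ‖F^[k] z - z‖ ≤ k * CF := by
    intro k
    induction k with
    | zero => intro z; simp
    | succ k ih =>
      intro z
      have h : F^[k+1] z - z = (F (F^[k] z) - F^[k] z) + (F^[k] z - z) := by
        rw [Function.iterate_succ_apply']; abel
      rw [h]
      calc ‖(F (F^[k] z) - F^[k] z) + (F^[k] z - z)‖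
          ≤ ‖F (F^[k] z) - F^[k] z‖ + ‖F^[k] z - z‖ := norm_add_le _ _
        _ ≤ CF + (k : ℝ) * CF := add_le_add (hCF _) (ih z)
        _ = ((k+1 : ℕ) : ℝ) * CF := by push_cast; ring
  set q : ℕ → ℕ := fun i => max (m i / n) 1 with hqdef
  have hq0 : ∀ i, 0 < q i := fun i => lt_of_lt_of_le one_pos (le_max_right _ _)
  have hqtop : Tendsto q atTop atTop := by
    rw [tendsto_atTop]
    intro b
    filter_upwards [hmtop.eventually_ge_atTop (n * b)] with i hi
    have hb : b ≤ m i / n := (Nat.le_div_iff_mul_le hn0).2 (mul_comm b n ▸ hi)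
    exact hb.trans (le_max_left _ _)
  have hev : ∀ᶠ i in atTop, q i = m i / n := by
    filter_upwards [hmtop.eventually_ge_atTop n] with i hi
    have h1 : 1 ≤ m i / n := (Nat.le_div_iff_mul_le hn0).2 (by simpa using hi)
    simp [hqdef, max_eq_left h1]
  refine ⟨x, q, hq0, hqtop, ?_⟩
  have key : ∀ i, ((q i : ℝ))⁻¹ • (K^[q i] (x i) - x i)
      = ((m i : ℝ) * ((q i : ℝ))⁻¹) • (((m i : ℝ))⁻¹ • (F^[m i] (x i) - x i))
        - ((q i : ℝ))⁻¹ • (F^[m i] (x i) - F^[n * q i] (x i)) + P := by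
    intro i
    have hm' : ((m i : ℝ)) ≠ 0 := by exact_mod_cast (hm0 i).ne'
    have hq' : ((q i : ℝ)) ≠ 0 := by exact_mod_cast (hq0 i).ne'
    rw [hKm, Nat.cast_smul_eq_nsmul ℝ (q i) P |>.symm]
    match_scalars <;> (field_simp; try ring)
  have hscal : Tendsto (fun i => (m i : ℝ) * ((q i : ℝ))⁻¹) atTop (nhds n) := by
    have hqR : Tendsto (fun i => ((q i : ℝ))) atTop atTop :=
      tendsto_natCast_atTop_atTop.comp hqtop
    have hdiff : Tendsto (fun i => (m i : ℝ) * ((q i : ℝ))⁻¹ - (n : ℝ)) atTop (nhds 0) := by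
      apply squeeze_zero_norm' (a := fun i => (n : ℝ) * ((q i : ℝ))⁻¹)
      · filter_upwards [hev, hmtop.eventually_ge_atTop n] with i hiq him
        have hq' : ((q i : ℝ)) ≠ 0 := by exact_mod_cast (hq0 i).ne'
        have hq'' : (0:ℝ) < (q i : ℝ) := by exact_mod_cast hq0 i
        have hmd : (m i : ℝ) = (n : ℝ) * (q i : ℝ) + ((m i % n : ℕ) : ℝ) := by
          rw [hiq]; exact_mod_cast (Nat.div_add_mod (m i) n).symm
        rw [hmd]
        have heq : ((n : ℝ) * (q i : ℝ) + ((m i % n : ℕ) : ℝ)) * ((q i : ℝ))⁻¹ - (n : ℝ)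
            = ((m i % n : ℕ) : ℝ) * ((q i : ℝ))⁻¹ := by field_simp; ring
        rw [heq, norm_mul, norm_inv, Real.norm_natCast, Real.norm_natCast]
        have hr : ((m i % n : ℕ) : ℝ) ≤ (n : ℝ) := by
          exact_mod_cast (Nat.mod_lt _ hn0).le
        exact mul_le_mul_of_nonneg_right hr (by positivity)
      · simpa using (hqR.inv_tendsto_atTop).const_mul (n : ℝ)
    have := hdiff.add_const (n : ℝ)
    simpa using this
  have hT1 : Tendsto (fun i => ((m i : ℝ) * ((q i : ℝ))⁻¹) •
      (((m i : ℝ))⁻¹ • (F^[m i] (x i) - x i))) atTop (nhds ((n : ℝ) • u)) :=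
    hscal.smul hlim
  have hT2 : Tendsto (fun i => ((q i : ℝ))⁻¹ • (F^[m i] (x i) - F^[n * q i] (x i)))
      atTop (nhds 0) := by
    apply tendsto_inv_smul_zero (C := (n : ℝ) * CF) hqtop
    filter_upwards [hev, hmtop.eventually_ge_atTop n] with i hiq him
    have hle : n * q i ≤ m i := by
      rw [hiq, mul_comm]; exact Nat.div_mul_le_self (m i) n
    have hsplit : F^[m i] (x i) = F^[m i - n * q i] (F^[n * q i] (x i)) := by
      rw [← Function.iterate_add_apply]; congr 1; omega
    have hlt : m i - n * q i < n := by
      have h1 := Nat.div_add_mod (m i) n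
      have h2 := Nat.mod_lt (m i) hn0
      rw [hiq]; omega
    rw [hsplit]
    calc ‖F^[m i - n * q i] (F^[n * q i] (x i)) - F^[n * q i] (x i)‖
        ≤ ((m i - n * q i : ℕ) : ℝ) * CF := hFk _ _
      _ ≤ (n : ℝ) * CF := by
          apply mul_le_mul_of_nonneg_right _ hCF0
          exact_mod_cast hlt.le
  have := (hT1.sub hT2).add_const P
  rw [sub_zero] at this
  exact this.congr (fun i => (key i).symm)

/-- if `F`, `H` are lifts of torus homeomorphisms `f`, `h` with
`h ∘ f ∘ h⁻¹ = fⁿ`, i.e. `H ∘ F ∘ H⁻¹ = Fⁿ + P₀` for some integer vector `P₀`, then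
`ρ(F) = (1/n)(A(ρ(F)) + Q)` for some integer vector `Q`. -/
theorem rotation_set_self_similar
    (n : ℕ) (hn : 2 ≤ n)
    (F H : (ℝ × ℝ) ≃ₜ (ℝ × ℝ)) (A : Matrix (Fin 2) (Fin 2) ℤ)
    (hA : A.det = 1 ∨ A.det = -1)
    (hF : ∀ (x : ℝ × ℝ) (p q : ℤ),
      F (x + ((p : ℝ), (q : ℝ))) = F x + ((p : ℝ), (q : ℝ)))
    (hH : ∀ (x : ℝ × ℝ) (p q : ℤ),
      H (x + ((p : ℝ), (q : ℝ))) = H x + matAct A ((p : ℝ), (q : ℝ)))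
    (P₀ : ℤ × ℤ)
    (hconj : ∀ x : ℝ × ℝ,
      H (F (H.symm x)) = (⇑F)^[n] x + ((P₀.1 : ℝ), (P₀.2 : ℝ))) :
    ∃ Q : ℤ × ℤ, rotSet ⇑F =
      (fun v : ℝ × ℝ => ((n : ℝ))⁻¹ • (matAct A v + ((Q.1 : ℝ), (Q.2 : ℝ)))) ''
        rotSet ⇑F := by
  have hn0 : 0 < n := by omega
  have hnR : ((n : ℝ)) ≠ 0 := by exact_mod_cast hn0.ne'
  set Pvec : ℝ × ℝ := ((P₀.1 : ℝ), (P₀.2 : ℝ)) with hPvec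
  -- inverse matrix
  set B : Matrix (Fin 2) (Fin 2) ℤ := A.det • A.adjugate with hBdef
  have hdet : A.det * A.det = 1 := by rcases hA with h | h <;> rw [h] <;> norm_num
  have hABm : A * B = 1 := by
    rw [hBdef, Matrix.mul_smul, Matrix.mul_adjugate, smul_smul, hdet, one_smul]
  have hBAm : B * A = 1 := by
    rw [hBdef, Matrix.smul_mul, Matrix.adjugate_mul, smul_smul, hdet, one_smul]
  have hABv : ∀ v, matAct A (matAct B v) = v := by
    intro v; rw [← matAct_mul, hABm, matAct_one]
  have hBAv : ∀ v, matAct B (matAct A v) = v := by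
    intro v; rw [← matAct_mul, hBAm, matAct_one]
  -- bound for F - id
  obtain ⟨CF, hCF⟩ : ∃ C : ℝ, ∀ x, ‖F x - x‖ ≤ C := by
    apply bdd_of_per (fun x => F x - x) (F.continuous.sub continuous_id)
    intro x p q; rw [hF]; abel
  -- bound for H - A
  obtain ⟨CH, hCH⟩ : ∃ C : ℝ, ∀ x, ‖H x - matAct A x‖ ≤ C := by
    apply bdd_of_per (fun x => H x - matAct A x) (H.continuous.sub (matAct_cont A))
    intro x p q; rw [hH, matAct_add]; abel
  -- translation property of H.symm
  have hHsymm : ∀ (y : ℝ × ℝ) (p q : ℤ),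
      H.symm (y + ((p : ℝ), (q : ℝ))) = H.symm y + matAct B ((p : ℝ), (q : ℝ)) := by
    intro y p q
    have hint : matAct B ((p : ℝ), (q : ℝ))
        = (((B 0 0 * p + B 0 1 * q : ℤ) : ℝ), ((B 1 0 * p + B 1 1 * q : ℤ) : ℝ)) := by
      apply Prod.ext <;> simp [matAct]
    apply H.injective
    rw [H.apply_symm_apply, hint, hH, H.apply_symm_apply, ← hint, hABv]
  -- bound for H.symm - B
  obtain ⟨CH', hCH'⟩ : ∃ C : ℝ, ∀ x, ‖H.symm x - matAct B x‖ ≤ C := by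
    apply bdd_of_per (fun x => H.symm x - matAct B x) (H.symm.continuous.sub (matAct_cont B))
    intro x p q; rw [hHsymm, matAct_add]; abel
  -- the conjugated map
  set K : ℝ × ℝ → ℝ × ℝ := fun y => H (F (H.symm y)) with hKdef
  have hKH : ∀ z, K (H z) = H (F z) := by intro z; simp [hKdef]
  have hKH' : ∀ z, F (H.symm z) = H.symm (K z) := by intro z; simp [hKdef]
  have hK1 : ∀ x, K x = (⇑F)^[n] x + Pvec := hconj
  -- F iterates commute with integer translations
  have hFk_per : ∀ (k : ℕ) (x : ℝ × ℝ) (p q : ℤ),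
      (⇑F)^[k] (x + ((p : ℝ), (q : ℝ))) = (⇑F)^[k] x + ((p : ℝ), (q : ℝ)) := by
    intro k
    induction k with
    | zero => intro x p q; simp
    | succ k ih =>
      intro x p q
      rw [Function.iterate_succ_apply, hF, ih, Function.iterate_succ_apply]
  have hsmulint : ∀ m : ℕ,
      m • Pvec = (((m * P₀.1 : ℤ) : ℝ), ((m * P₀.2 : ℤ) : ℝ)) := by
    intro m
    rw [← Nat.cast_smul_eq_nsmul ℝ, hPvec]
    simp only [Prod.smul_mk, smul_eq_mul]
    push_cast
    exact Prod.ext (by ring) (by ring)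
  have hKm : ∀ (m : ℕ) (x : ℝ × ℝ), K^[m] x = (⇑F)^[n * m] x + m • Pvec := by
    intro m
    induction m with
    | zero => intro x; simp
    | succ m ih =>
      intro x
      rw [Function.iterate_succ_apply', ih, hK1, hsmulint m, hFk_per,
        ← Function.iterate_add_apply, ← hsmulint m]
      have hnm : n + n * m = n * (m + 1) := by ring
      rw [hnm, succ_nsmul, add_assoc]
  -- the four key facts
  have E1 : ∀ u ∈ rotSet ⇑F, matAct A u ∈ rotSet K :=
    conj_fwd ⇑F K ⇑H A CH hCH hKH
  have E2 : ∀ w ∈ rotSet K, matAct B w ∈ rotSet ⇑F :=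
    conj_fwd K ⇑F ⇑H.symm B CH' hCH' hKH'
  have F1 : ∀ u ∈ rotSet ⇑F, (n : ℝ) • u + Pvec ∈ rotSet K :=
    pow_fwd ⇑F K n hn Pvec CF hCF hKm
  have F2 : ∀ w ∈ rotSet K, (n : ℝ)⁻¹ • (w - Pvec) ∈ rotSet ⇑F :=
    pow_bwd ⇑F K n hn0 Pvec hKm
  refine ⟨(-P₀.1, -P₀.2), ?_⟩
  have hQvec : (((-P₀.1 : ℤ) : ℝ), ((-P₀.2 : ℤ) : ℝ)) = -Pvec := by
    rw [hPvec]; apply Prod.ext <;> simp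
  ext u
  simp only [Set.mem_image]
  constructor
  · intro hu
    have h1 := F1 u hu
    have h2 := E2 _ h1
    refine ⟨_, h2, ?_⟩
    rw [hABv, hQvec, add_neg_cancel_right, smul_smul, inv_mul_cancel₀ hnR, one_smul]
  · rintro ⟨v, hv, rfl⟩
    have h1 := E1 v hv
    have h2 := F2 _ h1
    rw [hQvec, ← sub_eq_add_neg]
    exact h2
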